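/- H¹(X) = H¹_z(X) as sets of functions, and the two norms are equivalent, with equivalence constants depending only on the doubling constant C_D. -/

import Mathlib

open MeasureTheory Metric Filter Set

noncomputable section

/-- The parabolic quasi-distance on `ℝ × E`. -/
def pdist {E : Type*} [MetricSpace E] (p q : ℝ × E) : ℝ :=
  max (Real.sqrt |p.1 - q.1|) (dist p.2 q.2)

/-- The open parabolic ball in `N = ℝ × E`. -/
def pball {E : Type*} [MetricSpace E] (c : ℝ × E) (r : ℝ) : Set (ℝ × E) :=
  {p | pdist p c < r}

/-- The upper half space `X = (0,∞) × E` of `N = ℝ × E`. -/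
def Xset (E : Type*) : Set (ℝ × E) := {p | 0 < p.1}

/-- The product measure `ν = Lebesgue ⊗ μ` on `N = ℝ × E`. -/
def pmeas {E : Type*} [MeasurableSpace E] (μ : Measure E) : Measure (ℝ × E) :=
  (volume : Measure ℝ).prod μ

/-- A `(1,2)`-atom on `N`: supported in a parabolic ball `Q`, mean value zero, and
`‖a‖_{L²(ν)} ≤ ν(Q)^{-1/2}`. -/
def IsAtom12 {E : Type*} [MetricSpace E] [MeasurableSpace E]
    (μ : Measure E) (a : ℝ × E → ℝ) : Prop :=
  ∃ (c : ℝ × E) (r : ℝ), 0 < r ∧ Function.support a ⊆ pball c r ∧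
    Integrable a (pmeas μ) ∧ (∫ p, a p ∂(pmeas μ)) = 0 ∧
    eLpNorm a 2 (pmeas μ) ≤ (pmeas μ (pball c r)) ^ (-(1:ℝ)/2)

/-- `f = Σ λ_i a_i` with convergence in `L¹(ρ)`. -/
def HasL1Decomp {E : Type*} [MeasurableSpace E] (ρ : Measure (ℝ × E))
    (f : ℝ × E → ℝ) (lam : ℕ → ℝ) (a : ℕ → ℝ × E → ℝ) : Prop :=
  Summable (fun i => |lam i|) ∧
  Tendsto (fun k => eLpNorm (fun p => f p - ∑ i ∈ Finset.range k, lam i * a i p) 1 ρ)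
    atTop (nhds 0)

/-- Membership in the atomic Hardy space `H¹(N)`. -/
def MemH1 {E : Type*} [MetricSpace E] [MeasurableSpace E]
    (μ : Measure E) (f : ℝ × E → ℝ) : Prop :=
  Integrable f (pmeas μ) ∧
  ∃ (lam : ℕ → ℝ) (a : ℕ → ℝ × E → ℝ), (∀ i, IsAtom12 μ (a i)) ∧
    HasL1Decomp (pmeas μ) f lam a

/-- The `H¹(N)` norm: infimum of `Σ |λ_i|` over all atomic decompositions. -/
def H1norm {E : Type*} [MetricSpace E] [MeasurableSpace E]
    (μ : Measure E) (f : ℝ × E → ℝ) : ℝ :=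
  sInf {c | ∃ (lam : ℕ → ℝ) (a : ℕ → ℝ × E → ℝ), (∀ i, IsAtom12 μ (a i)) ∧
    HasL1Decomp (pmeas μ) f lam a ∧ c = ∑' i, |lam i|}

/-- Membership in `H¹_r(X)`: `f ∈ L¹(X,ν)` is the restriction to `X` of some `F ∈ H¹(N)`. -/
def MemH1r {E : Type*} [MetricSpace E] [MeasurableSpace E]
    (μ : Measure E) (f : ℝ × E → ℝ) : Prop :=
  IntegrableOn f (Xset E) (pmeas μ) ∧
  ∃ F : ℝ × E → ℝ, MemH1 μ F ∧ F =ᵐ[(pmeas μ).restrict (Xset E)] f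

/-- The quotient norm on `H¹_r(X)`. -/
def H1rnorm {E : Type*} [MetricSpace E] [MeasurableSpace E]
    (μ : Measure E) (f : ℝ × E → ℝ) : ℝ :=
  sInf {c | ∃ F : ℝ × E → ℝ, MemH1 μ F ∧ F =ᵐ[(pmeas μ).restrict (Xset E)] f ∧
    c = H1norm μ F}

/-- Membership in `H¹_z(X)`: the extension of `f` by zero belongs to `H¹(N)`. -/
def MemH1z {E : Type*} [MetricSpace E] [MeasurableSpace E]
    (μ : Measure E) (f : ℝ × E → ℝ) : Prop :=
  IntegrableOn f (Xset E) (pmeas μ) ∧ MemH1 μ ((Xset E).indicator f)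

/-- The `H¹_z(X)` norm: the `H¹(N)` norm of the zero extension. -/
def H1znorm {E : Type*} [MetricSpace E] [MeasurableSpace E]
    (μ : Measure E) (f : ℝ × E → ℝ) : ℝ :=
  H1norm μ ((Xset E).indicator f)

/-- `μ` is doubling with constant `C_D`, with all balls of positive finite measure. -/
def DoublingWith {E : Type*} [MetricSpace E] [MeasurableSpace E]
    (μ : Measure E) (C_D : ℝ) : Prop :=
  (∀ (x : E) (r : ℝ), 0 < r → 0 < μ (ball x r) ∧ μ (ball x r) < ⊤) ∧
  (∀ (x : E) (r : ℝ), 0 < r → μ (ball x (2 * r)) ≤ ENNReal.ofReal C_D * μ (ball x r))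

/-- A Coifman–Weiss atom for the space of homogeneous type `(X, d̃, ν)`: supported in
`Q ∩ X` for a parabolic ball `Q` centered at a point of `X`, with `∫_X a dν = 0` and
`‖a‖_{L²(ν)} ≤ ν(Q ∩ X)^{−1/2}`. -/
def IsCWAtom {E : Type*} [MetricSpace E] [MeasurableSpace E]
    (μ : Measure E) (a : ℝ × E → ℝ) : Prop :=
  ∃ (c : ℝ × E) (r : ℝ), 0 < r ∧ c ∈ Xset E ∧
    Function.support a ⊆ pball c r ∩ Xset E ∧
    Integrable a (pmeas μ) ∧ (∫ p in Xset E, a p ∂(pmeas μ)) = 0 ∧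
    eLpNorm a 2 (pmeas μ) ≤ (pmeas μ (pball c r ∩ Xset E)) ^ (-(1:ℝ)/2)

/-- Membership in the Coifman–Weiss Hardy space `H¹(X)` of `(X, d̃, ν)`. -/
def MemH1CW {E : Type*} [MetricSpace E] [MeasurableSpace E]
    (μ : Measure E) (f : ℝ × E → ℝ) : Prop :=
  IntegrableOn f (Xset E) (pmeas μ) ∧
  ∃ (lam : ℕ → ℝ) (a : ℕ → ℝ × E → ℝ), (∀ i, IsCWAtom μ (a i)) ∧
    Summable (fun i => |lam i|) ∧
    Tendsto (fun k => eLpNorm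
        (fun p => f p - ∑ i ∈ Finset.range k, lam i * a i p) 1
        ((pmeas μ).restrict (Xset E)))
      atTop (nhds 0)

/-- The Coifman–Weiss `H¹(X)` norm. -/
def H1CWnorm {E : Type*} [MetricSpace E] [MeasurableSpace E]
    (μ : Measure E) (f : ℝ × E → ℝ) : ℝ :=
  sInf {s | ∃ (lam : ℕ → ℝ) (a : ℕ → ℝ × E → ℝ), (∀ i, IsCWAtom μ (a i)) ∧
    Summable (fun i => |lam i|) ∧
    Tendsto (fun k => eLpNorm
        (fun p => f p - ∑ i ∈ Finset.range k, lam i * a i p) 1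
        ((pmeas μ).restrict (Xset E)))
      atTop (nhds 0) ∧ s = ∑' i, |lam i|}

open scoped ENNReal NNReal

set_option linter.unusedSectionVars false
set_option linter.unusedVariables false

section Aux

variable {E : Type} [MetricSpace E] [MeasurableSpace E] [BorelSpace E] {μ : Measure E} {C_D : ℝ}

lemma measurableSet_Xset : MeasurableSet (Xset E) :=
  measurableSet_lt measurable_const measurable_fst

lemma Xset_eq : Xset E = Ioi (0:ℝ) ×ˢ (univ : Set E) := by
  ext p; simp [Xset, Set.mem_prod]

lemma mem_pball_iff {c p : ℝ × E} {r : ℝ} (hr : 0 < r) :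
    p ∈ pball c r ↔ |p.1 - c.1| < r ^ 2 ∧ dist p.2 c.2 < r := by
  simp [pball, pdist, max_lt_iff, Real.sqrt_lt' hr]

lemma pball_eq (c : ℝ × E) {r : ℝ} (hr : 0 < r) :
    pball c r = Ioo (c.1 - r ^ 2) (c.1 + r ^ 2) ×ˢ ball c.2 r := by
  ext p
  rw [mem_pball_iff hr]
  simp only [Set.mem_prod, mem_Ioo, mem_ball, abs_sub_lt_iff]
  constructor
  · rintro ⟨⟨h1, h2⟩, h3⟩; exact ⟨⟨by linarith, by linarith⟩, h3⟩
  · rintro ⟨⟨h1, h2⟩, h3⟩; exact ⟨⟨by linarith, by linarith⟩, h3⟩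

lemma sigmaFinite_of_doubling (hD : DoublingWith μ C_D) : SigmaFinite μ := by
  rcases isEmpty_or_nonempty E with hE | hE
  · have : IsFiniteMeasure μ := ⟨by simp [Set.univ_eq_empty_iff.2 hE]⟩
    infer_instance
  · obtain ⟨x₀⟩ := hE
    exact ⟨⟨⟨fun n => ball x₀ (n + 1), fun _ => mem_univ _,
      fun n => (hD.1 x₀ (n + 1) (by positivity)).2, by
        ext y
        simp only [mem_iUnion, mem_ball, mem_univ, iff_true]
        obtain ⟨n, hn⟩ := exists_nat_gt (dist y x₀)
        exact ⟨n, by linarith⟩⟩⟩⟩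

lemma pmeas_prod (hD : DoublingWith μ C_D) (s : Set ℝ) (t : Set E) :
    pmeas μ (s ×ˢ t) = volume s * μ t := by
  haveI := sigmaFinite_of_doubling hD
  exact Measure.prod_prod s t

lemma pmeas_pball (hD : DoublingWith μ C_D) (c : ℝ × E) {r : ℝ} (hr : 0 < r) :
    pmeas μ (pball c r) = ENNReal.ofReal (2 * r ^ 2) * μ (ball c.2 r) := by
  rw [pball_eq c hr, pmeas_prod hD, Real.volume_Ioo]
  congr 1
  congr 1
  ring

lemma pmeas_pball_inter_X (hD : DoublingWith μ C_D) (c : ℝ × E) {r : ℝ} (hr : 0 < r) :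
    pmeas μ (pball c r ∩ Xset E)
      = ENNReal.ofReal (c.1 + r ^ 2 - max (c.1 - r ^ 2) 0) * μ (ball c.2 r) := by
  rw [pball_eq c hr, Xset_eq, Set.prod_inter_prod, inter_univ, Set.Ioo_inter_Ioi,
    pmeas_prod hD, Real.volume_Ioo]

def negFst (E : Type) [MeasurableSpace E] : (ℝ × E) ≃ᵐ (ℝ × E) where
  toEquiv :=
    { toFun := fun p => (-p.1, p.2)
      invFun := fun p => (-p.1, p.2)
      left_inv := fun p => by simp
      right_inv := fun p => by simp }
  measurable_toFun := (measurable_fst.neg.prodMk measurable_snd)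
  measurable_invFun := (measurable_fst.neg.prodMk measurable_snd)

lemma measurePreserving_negFst (hD : DoublingWith μ C_D) :
    MeasurePreserving (fun p : ℝ × E => ((-p.1, p.2) : ℝ × E)) (pmeas μ) (pmeas μ) := by
  haveI := sigmaFinite_of_doubling hD
  have h := (Measure.measurePreserving_neg (volume : Measure ℝ)).prod (MeasurePreserving.id μ)
  have he : (fun p : ℝ × E => ((-p.1, p.2) : ℝ × E)) = Prod.map Neg.neg id := by
    funext p; cases p; rfl
  rw [he]
  exact h

lemma measurableEmbedding_negFst :
    MeasurableEmbedding (fun p : ℝ × E => ((-p.1, p.2) : ℝ × E)) :=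
  (negFst E).measurableEmbedding

end Aux

section Aux2
variable {E : Type} [MetricSpace E] [MeasurableSpace E] [BorelSpace E] {μ : Measure E} {C_D : ℝ}

lemma pmeas_boundary (hD : DoublingWith μ C_D) : pmeas μ {p : ℝ × E | p.1 = 0} = 0 := by
  have h : {p : ℝ × E | p.1 = 0} = ({0} : Set ℝ) ×ˢ (univ : Set E) := by
    ext p
    simp only [mem_setOf_eq, Set.mem_prod, mem_singleton_iff, mem_univ, and_true]
  rw [h, pmeas_prod hD, Real.volume_singleton, zero_mul]

lemma neg_ae_compl_Xset (hD : DoublingWith μ C_D) :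
    ({p : ℝ × E | p.1 < 0} : Set (ℝ × E)) =ᵐ[pmeas μ] ((Xset E)ᶜ : Set (ℝ × E)) := by
  refine MeasureTheory.ae_eq_set.2 ?_
  constructor
  · have h1 : {p : ℝ × E | p.1 < 0} \ (Xset E)ᶜ = ∅ := by
      ext p
      simp only [mem_diff, mem_setOf_eq, mem_compl_iff, Xset, not_not, mem_empty_iff_false,
        iff_false, not_and]
      intro h hlt; exact absurd hlt (by linarith)
    simp [h1]
  · refine measure_mono_null ?_ (pmeas_boundary hD)
    intro p hp
    simp only [mem_diff, mem_compl_iff, Xset, mem_setOf_eq, not_lt] at hp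
    simp only [mem_setOf_eq]
    linarith [hp.2, hp.1]

lemma integrable_reflect (hD : DoublingWith μ C_D) {a : ℝ × E → ℝ}
    (hint : Integrable a (pmeas μ)) :
    Integrable (fun p : ℝ × E => a (-p.1, p.2)) (pmeas μ) :=
  ((measurePreserving_negFst hD).integrable_comp_emb measurableEmbedding_negFst).2 hint

lemma eLpNorm_reflect (hD : DoublingWith μ C_D) {a : ℝ × E → ℝ}
    (ha : AEStronglyMeasurable a (pmeas μ)) (q : ℝ≥0∞) :
    eLpNorm (fun p : ℝ × E => a (-p.1, p.2)) q (pmeas μ) = eLpNorm a q (pmeas μ) :=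
  eLpNorm_comp_measurePreserving ha (measurePreserving_negFst hD)

lemma setIntegral_reflect (hD : DoublingWith μ C_D) (a : ℝ × E → ℝ) :
    ∫ p in Xset E, a (-p.1, p.2) ∂(pmeas μ)
      = ∫ p in {p : ℝ × E | p.1 < 0}, a p ∂(pmeas μ) := by
  have hpre : (fun p : ℝ × E => ((-p.1, p.2) : ℝ × E)) ⁻¹' {p : ℝ × E | p.1 < 0} = Xset E := by
    ext p; simp [Xset]
  have h := (measurePreserving_negFst (μ := μ) hD).setIntegral_preimage_emb
    measurableEmbedding_negFst a {p : ℝ × E | p.1 < 0}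
  rw [hpre] at h
  exact h

lemma fold_integral_zero (hD : DoublingWith μ C_D) {a : ℝ × E → ℝ}
    (hint : Integrable a (pmeas μ)) (hzero : (∫ p, a p ∂(pmeas μ)) = 0) :
    ∫ p in Xset E, (a p + a (-p.1, p.2)) ∂(pmeas μ) = 0 := by
  rw [integral_add hint.integrableOn (integrable_reflect hD hint).integrableOn,
    setIntegral_reflect hD, setIntegral_congr_set (neg_ae_compl_Xset hD)]
  exact (integral_add_compl measurableSet_Xset hint).trans hzero

end Aux2
lemma rpow_helper {x y K : ℝ≥0∞} (hK0 : K ≠ 0) (hKt : K ≠ ⊤) (h : x ≤ K * y) :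
    y ^ (-(1:ℝ)/2) ≤ K ^ ((1:ℝ)/2) * x ^ (-(1:ℝ)/2) := by
  have hexp : (-(1:ℝ)/2) = -((1:ℝ)/2) := by ring
  rcases eq_or_ne y 0 with hy | hy
  · have hx : x = 0 := le_antisymm (by simpa [hy] using h) zero_le
    rw [hy, hx, hexp, ENNReal.rpow_neg]
    have hne : K ^ ((1:ℝ)/2) ≠ 0 := by simp [ENNReal.rpow_eq_zero_iff, hK0, hKt]
    simp only [ENNReal.zero_rpow_of_pos (by norm_num : (0:ℝ) < 1/2), ENNReal.inv_zero,
      ENNReal.mul_top hne, le_top]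
  · have hmul : (K * y) ^ (-(1:ℝ)/2) = K ^ (-(1:ℝ)/2) * y ^ (-(1:ℝ)/2) :=
      ENNReal.mul_rpow_of_ne_zero hK0 hy _
    have hanti : (K * y) ^ (-(1:ℝ)/2) ≤ x ^ (-(1:ℝ)/2) := by
      rw [hexp, ENNReal.rpow_neg, ENNReal.rpow_neg]
      exact ENNReal.inv_le_inv.2 (ENNReal.rpow_le_rpow h (by norm_num))
    calc y ^ (-(1:ℝ)/2) = (K ^ ((1:ℝ)/2) * K ^ (-(1:ℝ)/2)) * y ^ (-(1:ℝ)/2) := by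
          rw [← ENNReal.rpow_add _ _ hK0 hKt]
          norm_num
      _ = K ^ ((1:ℝ)/2) * ((K * y) ^ (-(1:ℝ)/2)) := by rw [hmul, mul_assoc]
      _ ≤ K ^ ((1:ℝ)/2) * x ^ (-(1:ℝ)/2) := mul_le_mul_right hanti _
section Atoms
variable {E : Type} [MetricSpace E] [MeasurableSpace E] [BorelSpace E] {μ : Measure E} {C_D : ℝ}

lemma cw_isAtom12 (hD : DoublingWith μ C_D) {a : ℝ × E → ℝ} (ha : IsCWAtom μ a) :
    IsAtom12 μ ((Real.sqrt 2)⁻¹ • a) := by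
  obtain ⟨c, r, hr, hcX, hsupp, hint, hzero, hnorm⟩ := ha
  have hs2 : (0:ℝ) < Real.sqrt 2 := Real.sqrt_pos.2 (by norm_num)
  have hsuppX : ∀ p, p ∉ Xset E → a p = 0 := by
    intro p hp
    by_contra h
    exact hp (hsupp (Function.mem_support.2 h)).2
  refine ⟨c, r, hr, ?_, hint.smul _, ?_, ?_⟩
  · exact (Function.support_const_smul_subset _ _).trans (hsupp.trans inter_subset_left)
  · have h1 : (∫ p, a p ∂(pmeas μ)) = 0 := by
      have h2 : ∫ x in (Xset E)ᶜ, a x ∂(pmeas μ) = 0 :=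
        setIntegral_eq_zero_of_forall_eq_zero (fun p hp => hsuppX p hp)
      rw [← integral_add_compl measurableSet_Xset hint, hzero, h2, add_zero]
    simp only [Pi.smul_apply, smul_eq_mul]
    rw [integral_const_mul, h1, mul_zero]
  · have hQ := pmeas_pball hD c hr
    have hQX := pmeas_pball_inter_X hD c hr
    have hcpos : (0:ℝ) < c.1 := hcX
    have hlen : 2 * r ^ 2 ≤ 2 * (c.1 + r ^ 2 - max (c.1 - r ^ 2) 0) := by
      rcases le_or_gt (c.1 - r ^ 2) 0 with h | h
      · rw [max_eq_right h]; nlinarith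
      · rw [max_eq_left h.le]; nlinarith [sq_nonneg r]
    have hcomp : pmeas μ (pball c r) ≤ 2 * pmeas μ (pball c r ∩ Xset E) := by
      rw [hQ, hQX]
      calc ENNReal.ofReal (2 * r ^ 2) * μ (ball c.2 r)
          ≤ ENNReal.ofReal (2 * (c.1 + r ^ 2 - max (c.1 - r ^ 2) 0)) * μ (ball c.2 r) :=
            mul_le_mul_left (ENNReal.ofReal_le_ofReal hlen) _
        _ = 2 * (ENNReal.ofReal (c.1 + r ^ 2 - max (c.1 - r ^ 2) 0) * μ (ball c.2 r)) := by
            rw [ENNReal.ofReal_mul (by norm_num : (0:ℝ) ≤ 2), ← mul_assoc, ENNReal.ofReal_ofNat]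
    have hkey : (pmeas μ (pball c r ∩ Xset E)) ^ (-(1:ℝ)/2)
        ≤ (2:ℝ≥0∞) ^ ((1:ℝ)/2) * (pmeas μ (pball c r)) ^ (-(1:ℝ)/2) :=
      rpow_helper (by norm_num) (by norm_num) hcomp
    have h2half : (2:ℝ≥0∞) ^ ((1:ℝ)/2) = ENNReal.ofReal (Real.sqrt 2) := by
      rw [Real.sqrt_eq_rpow, ← ENNReal.ofReal_rpow_of_pos (by norm_num : (0:ℝ) < 2),
        ENNReal.ofReal_ofNat]
    calc eLpNorm ((Real.sqrt 2)⁻¹ • a) 2 (pmeas μ)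
        = ENNReal.ofReal (Real.sqrt 2)⁻¹ * eLpNorm a 2 (pmeas μ) := by
          rw [eLpNorm_const_smul, Real.enorm_eq_ofReal (by positivity)]
      _ ≤ ENNReal.ofReal (Real.sqrt 2)⁻¹
            * ((2:ℝ≥0∞) ^ ((1:ℝ)/2) * (pmeas μ (pball c r)) ^ (-(1:ℝ)/2)) :=
          mul_le_mul_right (hnorm.trans hkey) _
      _ = (ENNReal.ofReal (Real.sqrt 2)⁻¹ * (2:ℝ≥0∞) ^ ((1:ℝ)/2))
            * (pmeas μ (pball c r)) ^ (-(1:ℝ)/2) := (mul_assoc _ _ _).symm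
      _ = 1 * (pmeas μ (pball c r)) ^ (-(1:ℝ)/2) := by
          rw [h2half, ← ENNReal.ofReal_mul (by positivity), inv_mul_cancel₀ hs2.ne',
            ENNReal.ofReal_one]
      _ = (pmeas μ (pball c r)) ^ (-(1:ℝ)/2) := one_mul _

lemma sqrt6CD_eq (hCD : 1 ≤ C_D) : Real.sqrt (6 * C_D) = 2 * Real.sqrt (3 * C_D / 2) := by
  rw [show (6 * C_D) = 4 * (3 * C_D / 2) by ring,
    Real.sqrt_mul (by norm_num : (0:ℝ) ≤ 4),
    show Real.sqrt 4 = 2 by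
      rw [show (4:ℝ) = 2 ^ 2 by norm_num, Real.sqrt_sq (by norm_num : (0:ℝ) ≤ 2)]]

lemma fold_isCWAtom (hCD : 1 ≤ C_D) (hD : DoublingWith μ C_D) {a : ℝ × E → ℝ}
    (ha : IsAtom12 μ a) :
    IsCWAtom μ ((Real.sqrt (6 * C_D))⁻¹ •
      (Xset E).indicator (fun p => a p + a (-p.1, p.2))) := by
  obtain ⟨c, r, hr, hsupp, hint, hzero, hnorm⟩ := ha
  set g : ℝ × E → ℝ := fun p => a p + a (-p.1, p.2) with hg
  set b : ℝ × E → ℝ := (Xset E).indicator g with hb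
  have hCD0 : (0:ℝ) < C_D := by linarith
  have hκpos : (0:ℝ) < Real.sqrt (6 * C_D) := Real.sqrt_pos.2 (by nlinarith)
  have hint_r : Integrable (fun p : ℝ × E => a (-p.1, p.2)) (pmeas μ) :=
    integrable_reflect hD hint
  have hint_g : Integrable g (pmeas μ) := hint.add hint_r
  have hint_b : Integrable b (pmeas μ) := hint_g.indicator measurableSet_Xset
  have hmean : ∫ p in Xset E, b p ∂(pmeas μ) = 0 := by
    rw [setIntegral_congr_fun measurableSet_Xset
      (fun p hp => indicator_of_mem hp g)]
    exact fold_integral_zero hD hint hzero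
  have hnorm_b : eLpNorm b 2 (pmeas μ) ≤ 2 * (pmeas μ (pball c r)) ^ (-(1:ℝ)/2) := by
    calc eLpNorm b 2 (pmeas μ) ≤ eLpNorm g 2 (pmeas μ) := eLpNorm_indicator_le _
      _ ≤ eLpNorm a 2 (pmeas μ)
          + eLpNorm (fun p : ℝ × E => a (-p.1, p.2)) 2 (pmeas μ) :=
          eLpNorm_add_le hint.aestronglyMeasurable hint_r.aestronglyMeasurable (by norm_num)
      _ = 2 * eLpNorm a 2 (pmeas μ) := by
          rw [eLpNorm_reflect hD hint.aestronglyMeasurable]; ring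
      _ ≤ 2 * (pmeas μ (pball c r)) ^ (-(1:ℝ)/2) := mul_le_mul_right hnorm _
  have hsupp_b : ∀ p, b p ≠ 0 →
      p ∈ Xset E ∧ (p ∈ pball c r ∨ ((-p.1, p.2) : ℝ × E) ∈ pball c r) := by
    intro p hp
    have hpX : p ∈ Xset E := by
      by_contra h
      exact hp (by simp [hb, indicator_of_notMem h])
    refine ⟨hpX, ?_⟩
    have hgp : g p ≠ 0 := by rwa [hb, indicator_of_mem hpX] at hp
    by_contra hcon
    push_neg at hcon
    have h1 : a p = 0 := Function.notMem_support.1 (fun hs => hcon.1 (hsupp hs))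
    have h2 : a (-p.1, p.2) = 0 := Function.notMem_support.1 (fun hs => hcon.2 (hsupp hs))
    exact hgp (by simp [hg, h1, h2])
  have hgeom : ∃ (c' : ℝ × E) (r' : ℝ), 0 < r' ∧ c' ∈ Xset E ∧
      Function.support b ⊆ pball c' r' ∩ Xset E ∧
      pmeas μ (pball c' r' ∩ Xset E)
        ≤ ENNReal.ofReal (3 * C_D / 2) * pmeas μ (pball c r) := by
    have hK1 : (1:ℝ≥0∞) ≤ ENNReal.ofReal (3 * C_D / 2) :=
      ENNReal.one_le_ofReal.2 (by linarith)
    rcases le_or_gt (r ^ 2) c.1 with hA | hA'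
    · -- Case A : ball inside the upper half space
      refine ⟨c, r, hr, lt_of_lt_of_le (by positivity) hA, ?_, ?_⟩
      · intro p hp
        obtain ⟨hpX, hmem⟩ := hsupp_b p hp
        refine ⟨?_, hpX⟩
        rcases hmem with h | h
        · exact h
        · exfalso
          have := (abs_lt.1 ((mem_pball_iff hr).1 h).1).1
          have hpX' : (0:ℝ) < p.1 := hpX
          simp only at this
          linarith
      · calc pmeas μ (pball c r ∩ Xset E) ≤ pmeas μ (pball c r) :=
            measure_mono inter_subset_left
          _ = 1 * pmeas μ (pball c r) := (one_mul _).symm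
          _ ≤ ENNReal.ofReal (3 * C_D / 2) * pmeas μ (pball c r) :=
            mul_le_mul_left hK1 _
    rcases le_or_gt c.1 (-(r ^ 2)) with hB | hB'
    · -- Case B : ball inside the lower half space
      refine ⟨(-c.1, c.2), r, hr, show (0:ℝ) < -c.1 by nlinarith, ?_, ?_⟩
      · intro p hp
        obtain ⟨hpX, hmem⟩ := hsupp_b p hp
        have hpX' : (0:ℝ) < p.1 := hpX
        refine ⟨?_, hpX⟩
        rcases hmem with h | h
        · exfalso
          have := (abs_lt.1 ((mem_pball_iff hr).1 h).1).2
          linarith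
        · obtain ⟨h1, h2⟩ := (mem_pball_iff hr).1 h
          simp only at h1 h2
          rw [mem_pball_iff hr]
          constructor
          · simp only
            rw [show p.1 - -c.1 = -(-p.1 - c.1) by ring, abs_neg]
            exact h1
          · exact h2
      · have he : pmeas μ (pball ((-c.1, c.2) : ℝ × E) r) = pmeas μ (pball c r) := by
          rw [pmeas_pball hD _ hr, pmeas_pball hD _ hr]
        calc pmeas μ (pball ((-c.1, c.2) : ℝ × E) r ∩ Xset E)
            ≤ pmeas μ (pball ((-c.1, c.2) : ℝ × E) r) := measure_mono inter_subset_left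
          _ = 1 * pmeas μ (pball c r) := by rw [he, one_mul]
          _ ≤ ENNReal.ofReal (3 * C_D / 2) * pmeas μ (pball c r) :=
            mul_le_mul_left hK1 _
    · -- Case C : ball crosses the boundary
      have hs2 : (0:ℝ) < Real.sqrt 2 := Real.sqrt_pos.2 (by norm_num)
      have hsq2 : Real.sqrt 2 * Real.sqrt 2 = 2 := Real.mul_self_sqrt (by norm_num)
      have hr' : (0:ℝ) < Real.sqrt 2 * r := by positivity
      have hrsq : (Real.sqrt 2 * r) ^ 2 = 2 * r ^ 2 := by
        rw [mul_pow]; rw [sq, hsq2]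
      refine ⟨((r ^ 2, c.2) : ℝ × E), Real.sqrt 2 * r, hr', show (0:ℝ) < r ^ 2 by positivity,
        ?_, ?_⟩
      · intro p hp
        obtain ⟨hpX, hmem⟩ := hsupp_b p hp
        have hpX' : (0:ℝ) < p.1 := hpX
        refine ⟨?_, hpX⟩
        have hub : p.1 < 2 * r ^ 2 := by
          rcases hmem with h | h
          · have := (abs_lt.1 ((mem_pball_iff hr).1 h).1).2
            nlinarith
          · have := (abs_lt.1 ((mem_pball_iff hr).1 h).1).1
            simp only at this
            nlinarith
        have hdist : dist p.2 c.2 < r := by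
          rcases hmem with h | h
          · exact ((mem_pball_iff hr).1 h).2
          · exact ((mem_pball_iff hr).1 h).2
        rw [mem_pball_iff hr']
        constructor
        · simp only
          rw [hrsq, abs_lt]
          constructor <;> nlinarith
        · have h12 : (1:ℝ) ≤ Real.sqrt 2 := by nlinarith
          calc dist p.2 c.2 < r := hdist
            _ ≤ Real.sqrt 2 * r := le_mul_of_one_le_left hr.le h12
      · have hmeq := pmeas_pball_inter_X hD ((r ^ 2, c.2) : ℝ × E) hr'
        simp only at hmeq
        rw [hmeq, hrsq]
        have hmax : max (r ^ 2 - 2 * r ^ 2) 0 = 0 := max_eq_right (by nlinarith)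
        rw [hmax]
        have hsub : ball c.2 (Real.sqrt 2 * r) ⊆ ball c.2 (2 * r) := by
          apply ball_subset_ball
          have : Real.sqrt 2 ≤ 2 := by nlinarith
          nlinarith
        have hdb : μ (ball c.2 (Real.sqrt 2 * r)) ≤ ENNReal.ofReal C_D * μ (ball c.2 r) :=
          (measure_mono hsub).trans (hD.2 c.2 r hr)
        calc ENNReal.ofReal (r ^ 2 + 2 * r ^ 2 - 0) * μ (ball c.2 (Real.sqrt 2 * r))
            ≤ ENNReal.ofReal (3 * r ^ 2) * (ENNReal.ofReal C_D * μ (ball c.2 r)) := by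
              rw [show r ^ 2 + 2 * r ^ 2 - 0 = 3 * r ^ 2 by ring]
              exact mul_le_mul_right hdb _
          _ = ENNReal.ofReal (3 * C_D / 2) * pmeas μ (pball c r) := by
              rw [pmeas_pball hD c hr, ← mul_assoc, ← mul_assoc,
                ← ENNReal.ofReal_mul (by positivity), ← ENNReal.ofReal_mul (by positivity)]
              congr 2
              ring
  obtain ⟨c', r', hr'', hc'X, hsupp', hle⟩ := hgeom
  refine ⟨c', r', hr'', hc'X, ?_, hint_b.smul _, ?_, ?_⟩
  · refine (Function.support_const_smul_subset _ _).trans ?_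
    intro p hp
    exact hsupp' hp
  · simp only [Pi.smul_apply, smul_eq_mul]
    rw [integral_const_mul, hmean, mul_zero]
  · have hK0 : (ENNReal.ofReal (3 * C_D / 2)) ≠ 0 := by
      simp only [ne_eq, ENNReal.ofReal_eq_zero, not_le]
      linarith
    have hkey : (pmeas μ (pball c r)) ^ (-(1:ℝ)/2)
        ≤ (ENNReal.ofReal (3 * C_D / 2)) ^ ((1:ℝ)/2)
          * (pmeas μ (pball c' r' ∩ Xset E)) ^ (-(1:ℝ)/2) :=
      rpow_helper hK0 ENNReal.ofReal_ne_top hle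
    have hKhalf : (ENNReal.ofReal (3 * C_D / 2)) ^ ((1:ℝ)/2)
        = ENNReal.ofReal (Real.sqrt (3 * C_D / 2)) := by
      rw [Real.sqrt_eq_rpow, ← ENNReal.ofReal_rpow_of_pos (by linarith)]
    calc eLpNorm ((Real.sqrt (6 * C_D))⁻¹ • b) 2 (pmeas μ)
        = ENNReal.ofReal (Real.sqrt (6 * C_D))⁻¹ * eLpNorm b 2 (pmeas μ) := by
          rw [eLpNorm_const_smul, Real.enorm_eq_ofReal (by positivity)]
      _ ≤ ENNReal.ofReal (Real.sqrt (6 * C_D))⁻¹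
            * (2 * ((ENNReal.ofReal (3 * C_D / 2)) ^ ((1:ℝ)/2)
              * (pmeas μ (pball c' r' ∩ Xset E)) ^ (-(1:ℝ)/2))) := by
          refine mul_le_mul_right (hnorm_b.trans ?_) _
          exact mul_le_mul_right hkey _
      _ = (ENNReal.ofReal (Real.sqrt (6 * C_D))⁻¹
            * (2 * (ENNReal.ofReal (3 * C_D / 2)) ^ ((1:ℝ)/2)))
            * (pmeas μ (pball c' r' ∩ Xset E)) ^ (-(1:ℝ)/2) := by ring
      _ = 1 * (pmeas μ (pball c' r' ∩ Xset E)) ^ (-(1:ℝ)/2) := by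
          rw [hKhalf, show (2:ℝ≥0∞) = ENNReal.ofReal 2 from (ENNReal.ofReal_ofNat 2).symm,
            ← ENNReal.ofReal_mul (by norm_num), ← ENNReal.ofReal_mul (by positivity),
            show (2:ℝ) * Real.sqrt (3 * C_D / 2) = Real.sqrt (6 * C_D) from
              (sqrt6CD_eq hCD).symm,
            inv_mul_cancel₀ hκpos.ne', ENNReal.ofReal_one]
      _ = (pmeas μ (pball c' r' ∩ Xset E)) ^ (-(1:ℝ)/2) := one_mul _

end Atoms

section Decomp
variable {E : Type} [MetricSpace E] [MeasurableSpace E] [BorelSpace E] {μ : Measure E} {C_D : ℝ}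

lemma atom12_integrable {a : ℝ × E → ℝ} (h : IsAtom12 μ a) : Integrable a (pmeas μ) := by
  obtain ⟨_, _, _, _, h, _, _⟩ := h
  exact h

lemma cwatom_integrable {a : ℝ × E → ℝ} (h : IsCWAtom μ a) : Integrable a (pmeas μ) := by
  obtain ⟨_, _, _, _, _, h, _, _⟩ := h
  exact h

lemma cwatom_support {a : ℝ × E → ℝ} (h : IsCWAtom μ a) : ∀ p, p ∉ Xset E → a p = 0 := by
  obtain ⟨_, _, _, _, hsupp, _, _, _⟩ := h
  intro p hp
  by_contra hne
  exact hp (hsupp (Function.mem_support.2 hne)).2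

lemma decomp_z_to_cw (hCD : 1 ≤ C_D) (hD : DoublingWith μ C_D) {f : ℝ × E → ℝ}
    {lam : ℕ → ℝ} {a : ℕ → ℝ × E → ℝ} (hat : ∀ i, IsAtom12 μ (a i))
    (hsum : Summable fun i => |lam i|)
    (htend : Tendsto (fun k => eLpNorm
      (fun p => (Xset E).indicator f p - ∑ i ∈ Finset.range k, lam i * a i p) 1 (pmeas μ))
      atTop (nhds 0))
    (hF : Integrable ((Xset E).indicator f) (pmeas μ)) :
    ∃ (lam' : ℕ → ℝ) (a' : ℕ → ℝ × E → ℝ), (∀ i, IsCWAtom μ (a' i)) ∧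
      Summable (fun i => |lam' i|) ∧
      Tendsto (fun k => eLpNorm
        (fun p => f p - ∑ i ∈ Finset.range k, lam' i * a' i p) 1
        ((pmeas μ).restrict (Xset E))) atTop (nhds 0) ∧
      (∑' i, |lam' i|) = Real.sqrt (6 * C_D) * ∑' i, |lam i| := by
  have hCD0 : (0:ℝ) < C_D := by linarith
  set κ : ℝ := Real.sqrt (6 * C_D) with hκ
  have hκpos : (0:ℝ) < κ := Real.sqrt_pos.2 (by nlinarith)
  set b : ℕ → ℝ × E → ℝ :=
    fun i => (Xset E).indicator (fun p => a i p + a i (-p.1, p.2)) with hbdef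
  refine ⟨fun i => κ * lam i, fun i => κ⁻¹ • b i, fun i => fold_isCWAtom hCD hD (hat i), ?_, ?_, ?_⟩
  · simpa [abs_mul, abs_of_pos hκpos] using hsum.mul_left κ
  · -- convergence
    set g : ℕ → ℝ × E → ℝ :=
      fun k p => (Xset E).indicator f p - ∑ i ∈ Finset.range k, lam i * a i p with hgdef
    have hint_g : ∀ k, Integrable (g k) (pmeas μ) := by
      intro k
      exact hF.sub (integrable_finset_sum _ fun i _ => ((atom12_integrable (hat i)).const_mul _))
    have hbound : ∀ k, eLpNorm
        (fun p => f p - ∑ i ∈ Finset.range k, (κ * lam i) * ((κ⁻¹ • b i) p)) 1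
        ((pmeas μ).restrict (Xset E)) ≤ 2 * eLpNorm (g k) 1 (pmeas μ) := by
      intro k
      have hEq : EqOn (fun p : ℝ × E => f p - ∑ i ∈ Finset.range k, (κ * lam i) * ((κ⁻¹ • b i) p))
          (fun p : ℝ × E => g k p + g k (-p.1, p.2)) (Xset E) := by
        intro p hp
        have hpX : (0:ℝ) < p.1 := hp
        have hnX : ((-p.1, p.2) : ℝ × E) ∉ Xset E := by
          simp only [Xset, mem_setOf_eq, not_lt]
          linarith
        simp only [hgdef, hbdef, Pi.smul_apply, smul_eq_mul,
          indicator_of_mem hp, indicator_of_notMem hnX]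
        have hterm : ∀ i, (κ * lam i) * (κ⁻¹ * (a i p + a i (-p.1, p.2)))
            = lam i * a i p + lam i * a i (-p.1, p.2) := by
          intro i
          field_simp
        rw [Finset.sum_congr rfl (fun i _ => hterm i), Finset.sum_add_distrib]
        ring
      have e1 : eLpNorm
          (fun p => f p - ∑ i ∈ Finset.range k, (κ * lam i) * ((κ⁻¹ • b i) p)) 1
          ((pmeas μ).restrict (Xset E))
          = eLpNorm (fun p : ℝ × E => g k p + g k (-p.1, p.2)) 1
            ((pmeas μ).restrict (Xset E)) :=
        eLpNorm_congr_ae (Filter.eventuallyEq_of_mem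
          (self_mem_ae_restrict measurableSet_Xset) hEq)
      have hint_gr : Integrable (fun p : ℝ × E => g k (-p.1, p.2)) (pmeas μ) :=
        integrable_reflect hD (hint_g k)
      have e2 : eLpNorm (fun p : ℝ × E => g k p + g k (-p.1, p.2)) 1
            ((pmeas μ).restrict (Xset E))
          ≤ eLpNorm (g k) 1 ((pmeas μ).restrict (Xset E))
            + eLpNorm (fun p : ℝ × E => g k (-p.1, p.2)) 1 ((pmeas μ).restrict (Xset E)) :=
        eLpNorm_add_le ((hint_g k).aestronglyMeasurable.restrict)
          (hint_gr.aestronglyMeasurable.restrict) le_rfl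
      have e3 : eLpNorm (g k) 1 ((pmeas μ).restrict (Xset E))
          ≤ eLpNorm (g k) 1 (pmeas μ) :=
        eLpNorm_mono_measure _ Measure.restrict_le_self
      have e4 : eLpNorm (fun p : ℝ × E => g k (-p.1, p.2)) 1 ((pmeas μ).restrict (Xset E))
          ≤ eLpNorm (g k) 1 (pmeas μ) := by
        refine le_trans (eLpNorm_mono_measure _ Measure.restrict_le_self) ?_
        rw [eLpNorm_reflect hD (hint_g k).aestronglyMeasurable]
      rw [e1, two_mul]
      exact e2.trans (add_le_add e3 e4)
    have h2 : Tendsto (fun k => 2 * eLpNorm (g k) 1 (pmeas μ)) atTop (nhds 0) := by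
      have := ENNReal.Tendsto.const_mul (a := (2:ℝ≥0∞)) htend (Or.inr (by norm_num))
      simpa using this
    exact tendsto_of_tendsto_of_tendsto_of_le_of_le tendsto_const_nhds h2
      (fun k => zero_le) hbound
  · rw [← tsum_mul_left]
    congr 1
    funext i
    rw [abs_mul, abs_of_pos hκpos]

lemma decomp_cw_to_z (hD : DoublingWith μ C_D) {f : ℝ × E → ℝ}
    {lam : ℕ → ℝ} {a : ℕ → ℝ × E → ℝ} (hat : ∀ i, IsCWAtom μ (a i))
    (hsum : Summable fun i => |lam i|)
    (htend : Tendsto (fun k => eLpNorm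
      (fun p => f p - ∑ i ∈ Finset.range k, lam i * a i p) 1
      ((pmeas μ).restrict (Xset E))) atTop (nhds 0)) :
    ∃ (lam' : ℕ → ℝ) (a' : ℕ → ℝ × E → ℝ), (∀ i, IsAtom12 μ (a' i)) ∧
      Summable (fun i => |lam' i|) ∧
      Tendsto (fun k => eLpNorm
        (fun p => (Xset E).indicator f p - ∑ i ∈ Finset.range k, lam' i * a' i p) 1
        (pmeas μ)) atTop (nhds 0) ∧
      (∑' i, |lam' i|) = Real.sqrt 2 * ∑' i, |lam i| := by
  have hs2 : (0:ℝ) < Real.sqrt 2 := Real.sqrt_pos.2 (by norm_num)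
  refine ⟨fun i => Real.sqrt 2 * lam i, fun i => (Real.sqrt 2)⁻¹ • a i,
    fun i => cw_isAtom12 hD (hat i), ?_, ?_, ?_⟩
  · simpa [abs_mul, abs_of_pos hs2] using hsum.mul_left (Real.sqrt 2)
  · have hEq : ∀ k, (fun p : ℝ × E =>
        (Xset E).indicator f p - ∑ i ∈ Finset.range k, (Real.sqrt 2 * lam i)
          * (((Real.sqrt 2)⁻¹ • a i) p))
        = (Xset E).indicator (fun p => f p - ∑ i ∈ Finset.range k, lam i * a i p) := by
      intro k
      funext p
      by_cases hp : p ∈ Xset E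
      · simp only [indicator_of_mem hp, Pi.smul_apply, smul_eq_mul]
        congr 1
        refine Finset.sum_congr rfl (fun i _ => ?_)
        field_simp
      · simp only [indicator_of_notMem hp, Pi.smul_apply, smul_eq_mul]
        have hz : ∀ i, a i p = 0 := fun i => cwatom_support (hat i) p hp
        simp [hz]
    have hconv : ∀ k, eLpNorm
        (fun p : ℝ × E => (Xset E).indicator f p - ∑ i ∈ Finset.range k,
          (Real.sqrt 2 * lam i) * (((Real.sqrt 2)⁻¹ • a i) p)) 1 (pmeas μ)
        = eLpNorm (fun p => f p - ∑ i ∈ Finset.range k, lam i * a i p) 1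
          ((pmeas μ).restrict (Xset E)) := by
      intro k
      rw [hEq k, eLpNorm_indicator_eq_eLpNorm_restrict measurableSet_Xset]
    simpa only [hconv] using htend
  · rw [← tsum_mul_left]
    congr 1
    funext i
    rw [abs_mul, abs_of_pos hs2]

end Decomp

/-- `H¹(X) = H¹_z(X)` as sets of functions, with equivalent norms whose
equivalence constants depend only on the doubling constant `C_D`. -/
theorem stmt5 (C_D : ℝ) (hCD : 1 ≤ C_D) :
    ∃ c C : ℝ, 0 < c ∧ 0 < C ∧
      ∀ (E : Type) (_ : MetricSpace E) (_ : MeasurableSpace E), BorelSpace E →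
        ∀ μ : Measure E, DoublingWith μ C_D →
          ∀ f : ℝ × E → ℝ, IntegrableOn f (Xset E) (pmeas μ) →
            (MemH1CW μ f ↔ MemH1z μ f) ∧
            (MemH1z μ f →
              c * H1znorm μ f ≤ H1CWnorm μ f ∧ H1CWnorm μ f ≤ C * H1znorm μ f) := by
  have hCD0 : (0:ℝ) < C_D := by linarith
  have hs2 : (0:ℝ) < Real.sqrt 2 := Real.sqrt_pos.2 (by norm_num)
  have hκ : (0:ℝ) < Real.sqrt (6 * C_D) := Real.sqrt_pos.2 (by nlinarith)
  refine ⟨(Real.sqrt 2)⁻¹, Real.sqrt (6 * C_D), by positivity, hκ, ?_⟩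
  intro E iM iMeas iB μ hD f hf
  letI := iM; letI := iMeas; haveI := iB
  have hFint : Integrable ((Xset E).indicator f) (pmeas μ) :=
    (integrable_indicator_iff measurableSet_Xset).2 hf
  constructor
  · constructor
    · rintro ⟨hfI, lam, a, hat, hsum, htend⟩
      obtain ⟨lam', a', hat', hsum', htend', _⟩ := decomp_cw_to_z hD hat hsum htend
      exact ⟨hf, hFint, lam', a', hat', hsum', htend'⟩
    · rintro ⟨hfI, _, lam, a, hat, hdec⟩
      obtain ⟨lam', a', hat', hsum', htend', _⟩ :=
        decomp_z_to_cw hCD hD hat hdec.1 hdec.2 hFint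
      exact ⟨hf, lam', a', hat', hsum', htend'⟩
  · intro hz
    obtain ⟨hfI, _, lam0, a0, hat0, hdec0⟩ := hz
    have hznorm : H1znorm μ f = sInf {c | ∃ (lam : ℕ → ℝ) (a : ℕ → ℝ × E → ℝ),
        (∀ i, IsAtom12 μ (a i)) ∧
        HasL1Decomp (pmeas μ) ((Xset E).indicator f) lam a ∧ c = ∑' i, |lam i|} := rfl
    have hcwnorm : H1CWnorm μ f = sInf {s | ∃ (lam : ℕ → ℝ) (a : ℕ → ℝ × E → ℝ),
        (∀ i, IsCWAtom μ (a i)) ∧ Summable (fun i => |lam i|) ∧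
        Tendsto (fun k => eLpNorm
          (fun p => f p - ∑ i ∈ Finset.range k, lam i * a i p) 1
          ((pmeas μ).restrict (Xset E))) atTop (nhds 0) ∧ s = ∑' i, |lam i|} := rfl
    set Zs := {c | ∃ (lam : ℕ → ℝ) (a : ℕ → ℝ × E → ℝ),
        (∀ i, IsAtom12 μ (a i)) ∧
        HasL1Decomp (pmeas μ) ((Xset E).indicator f) lam a ∧ c = ∑' i, |lam i|} with hZsdef
    set CWs := {s | ∃ (lam : ℕ → ℝ) (a : ℕ → ℝ × E → ℝ),
        (∀ i, IsCWAtom μ (a i)) ∧ Summable (fun i => |lam i|) ∧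
        Tendsto (fun k => eLpNorm
          (fun p => f p - ∑ i ∈ Finset.range k, lam i * a i p) 1
          ((pmeas μ).restrict (Xset E))) atTop (nhds 0) ∧ s = ∑' i, |lam i|} with hCWsdef
    have hZne : Zs.Nonempty := ⟨∑' i, |lam0 i|, lam0, a0, hat0, hdec0, rfl⟩
    have hZbdd : BddBelow Zs := ⟨0, by
      rintro c ⟨lam, a, _, _, rfl⟩
      exact tsum_nonneg fun i => abs_nonneg _⟩
    have hCWbdd : BddBelow CWs := ⟨0, by
      rintro c ⟨lam, a, _, _, _, rfl⟩
      exact tsum_nonneg fun i => abs_nonneg _⟩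
    have hmapZ : ∀ S ∈ Zs, Real.sqrt (6 * C_D) * S ∈ CWs := by
      rintro S ⟨lam, a, hat, hdec, rfl⟩
      obtain ⟨lam', a', h1, h2, h3, h4⟩ := decomp_z_to_cw hCD hD hat hdec.1 hdec.2 hFint
      exact ⟨lam', a', h1, h2, h3, h4.symm⟩
    have hmapCW : ∀ S ∈ CWs, Real.sqrt 2 * S ∈ Zs := by
      rintro S ⟨lam, a, hat, hsum, ht, rfl⟩
      obtain ⟨lam', a', h1, h2, h3, h4⟩ := decomp_cw_to_z hD hat hsum ht
      exact ⟨lam', a', h1, ⟨h2, h3⟩, h4.symm⟩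
    have hCWne : CWs.Nonempty := by
      obtain ⟨S, hS⟩ := hZne
      exact ⟨_, hmapZ S hS⟩
    rw [hznorm, hcwnorm]
    constructor
    · refine le_csInf hCWne (fun S hS => ?_)
      have h1 : sInf Zs ≤ Real.sqrt 2 * S := csInf_le hZbdd (hmapCW S hS)
      exact (inv_mul_le_iff₀ hs2).2 h1
    · have hle : sInf CWs / Real.sqrt (6 * C_D) ≤ sInf Zs := by
        refine le_csInf hZne (fun S hS => ?_)
        have h1 : sInf CWs ≤ Real.sqrt (6 * C_D) * S := csInf_le hCWbdd (hmapZ S hS)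
        exact (div_le_iff₀ hκ).2 (by rw [mul_comm]; exact h1)
      calc sInf CWs = sInf CWs / Real.sqrt (6 * C_D) * Real.sqrt (6 * C_D) := by
            field_simp
        _ ≤ sInf Zs * Real.sqrt (6 * C_D) := mul_le_mul_of_nonneg_right hle hκ.le
        _ = Real.sqrt (6 * C_D) * sInf Zs := mul_comm _ _
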